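/- Let X₁ and X₂ be square-integrable random variables and E an event such that X₁ is independent of X₂·1_E. Then Cov(X₁, X₂) = Cov(X₁, X₂·1_{Eᶜ}), and |Cov(X₁, X₂)| ≤ sqrt(Var(X₁)) · (E[X₂⁴])^{1/4} · P(Eᶜ)^{1/4}. -/

import Mathlib

open MeasureTheory ProbabilityTheory

/-- Covariance of two real random variables: `Cov(X,Y) = E[XY] − E[X]E[Y]`. -/
noncomputable def cov {Ω : Type*} [MeasurableSpace Ω] (μ : Measure Ω)
    (X Y : Ω → ℝ) : ℝ :=
  (∫ ω, X ω * Y ω ∂μ) - (∫ ω, X ω ∂μ) * (∫ ω, Y ω ∂μ)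

/-- Cauchy–Schwarz for integrals. -/
lemma cs_aux {Ω : Type*} [MeasurableSpace Ω] (μ : Measure Ω) (f g : Ω → ℝ)
    (hf : MemLp f 2 μ) (hg : MemLp g 2 μ) :
    |∫ ω, f ω * g ω ∂μ| ≤ Real.sqrt (∫ ω, f ω ^ 2 ∂μ) * Real.sqrt (∫ ω, g ω ^ 2 ∂μ) := by
  have hconj : Real.HolderConjugate 2 2 := Real.HolderConjugate.two_two
  have h2 : (ENNReal.ofReal (2 : ℝ)) = 2 := by simp
  have hH := integral_mul_le_Lp_mul_Lq_of_nonneg (μ := μ) hconj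
      (f := fun ω => |f ω|) (g := fun ω => |g ω|)
      (ae_of_all _ fun ω => abs_nonneg _) (ae_of_all _ fun ω => abs_nonneg _)
      (by simpa [Real.norm_eq_abs, h2] using hf.norm)
      (by simpa [Real.norm_eq_abs, h2] using hg.norm)
  have h1 : |∫ ω, f ω * g ω ∂μ| ≤ ∫ ω, |f ω| * |g ω| ∂μ := by
    simpa [Real.norm_eq_abs, abs_mul] using
      norm_integral_le_integral_norm (fun ω => f ω * g ω) (μ := μ)
  have hfe : ∫ ω, |f ω| ^ (2 : ℝ) ∂μ = ∫ ω, f ω ^ 2 ∂μ := by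
    refine integral_congr_ae (ae_of_all _ fun ω => ?_)
    show |f ω| ^ (2 : ℝ) = f ω ^ 2
    rw [show ((2 : ℝ)) = ((2 : ℕ) : ℝ) by norm_num, Real.rpow_natCast, sq_abs]
  have hge : ∫ ω, |g ω| ^ (2 : ℝ) ∂μ = ∫ ω, g ω ^ 2 ∂μ := by
    refine integral_congr_ae (ae_of_all _ fun ω => ?_)
    show |g ω| ^ (2 : ℝ) = g ω ^ 2
    rw [show ((2 : ℝ)) = ((2 : ℕ) : ℝ) by norm_num, Real.rpow_natCast, sq_abs]
  have hH' : ∫ ω, |f ω| * |g ω| ∂μ ≤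
      (∫ ω, f ω ^ 2 ∂μ) ^ ((1 : ℝ) / 2) * (∫ ω, g ω ^ 2 ∂μ) ^ ((1 : ℝ) / 2) := by
    rw [← hfe, ← hge]
    simpa using hH
  rw [Real.sqrt_eq_rpow, Real.sqrt_eq_rpow]
  exact h1.trans hH'

lemma sq_int_aux {Ω : Type*} [MeasurableSpace Ω] {μ : Measure Ω} [IsProbabilityMeasure μ]
    {X : Ω → ℝ} (hm : AEMeasurable X μ) (h4 : Integrable (fun ω => X ω ^ 4) μ) :
    Integrable (fun ω => X ω ^ 2) μ := by
  refine Integrable.mono' ((integrable_const (1 : ℝ)).add h4) ?_ ?_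
  · exact (hm.pow_const 2).aestronglyMeasurable
  · refine ae_of_all _ fun ω => ?_
    have : X ω ^ 2 ≤ 1 + X ω ^ 4 := by nlinarith [sq_nonneg (X ω ^ 2 - 1), sq_nonneg (X ω)]
    simpa [Real.norm_eq_abs, abs_of_nonneg (sq_nonneg (X ω))] using this

lemma memLp2_aux {Ω : Type*} [MeasurableSpace Ω] {μ : Measure Ω} [IsProbabilityMeasure μ]
    {X : Ω → ℝ} (hm : AEMeasurable X μ) (h4 : Integrable (fun ω => X ω ^ 4) μ) :
    MemLp X 2 μ := by
  rw [memLp_two_iff_integrable_sq hm.aestronglyMeasurable]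
  exact sq_int_aux hm h4

theorem stmt_9 {Ω : Type*} [MeasurableSpace Ω] (μ : Measure Ω) [IsProbabilityMeasure μ]
    (X₁ X₂ : Ω → ℝ) (E : Set Ω) (hE : MeasurableSet E)
    (hm₁ : AEMeasurable X₁ μ) (hm₂ : AEMeasurable X₂ μ)
    (h₁ : Integrable (fun ω => X₁ ω ^ 4) μ)
    (h₂ : Integrable (fun ω => X₂ ω ^ 4) μ)
    (hindep : IndepFun X₁ (fun ω => X₂ ω * E.indicator (fun _ => (1 : ℝ)) ω) μ) :
    cov μ X₁ X₂ = cov μ X₁ (fun ω => X₂ ω * Eᶜ.indicator (fun _ => (1 : ℝ)) ω) ∧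
    |cov μ X₁ X₂| ≤ Real.sqrt (variance X₁ μ)
        * (∫ ω, X₂ ω ^ 4 ∂μ) ^ ((1 : ℝ) / 4) * (μ Eᶜ).toReal ^ ((1 : ℝ) / 4) := by
  set Y : Ω → ℝ := fun ω => X₂ ω * E.indicator (fun _ => (1 : ℝ)) ω with hYdef
  set Z : Ω → ℝ := fun ω => X₂ ω * Eᶜ.indicator (fun _ => (1 : ℝ)) ω with hZdef
  have hX₁L2 : MemLp X₁ 2 μ := memLp2_aux hm₁ h₁
  have hX₂L2 : MemLp X₂ 2 μ := memLp2_aux hm₂ h₂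
  have hX₁int : Integrable X₁ μ := hX₁L2.integrable one_le_two
  have hX₂int : Integrable X₂ μ := hX₂L2.integrable one_le_two
  have hsq₁ : Integrable (fun ω => X₁ ω ^ 2) μ := sq_int_aux hm₁ h₁
  have hsq₂ : Integrable (fun ω => X₂ ω ^ 2) μ := sq_int_aux hm₂ h₂
  -- decomposition X₂ = Y + Z
  have hYZ : ∀ ω, X₂ ω = Y ω + Z ω := by
    intro ω
    simp only [hYdef, hZdef, ← mul_add]
    by_cases h : ω ∈ E <;> simp [Set.indicator_apply, h]
  have hmY : AEMeasurable Y μ :=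
    hm₂.mul ((measurable_const.indicator hE).aemeasurable)
  have hmZ : AEMeasurable Z μ :=
    hm₂.mul ((measurable_const.indicator hE.compl).aemeasurable)
  have habsY : ∀ ω, |Y ω| ≤ |X₂ ω| := by
    intro ω
    by_cases h : ω ∈ E <;> simp [hYdef, Set.indicator_apply, h, abs_nonneg]
  have habsZ : ∀ ω, |Z ω| ≤ |X₂ ω| := by
    intro ω
    by_cases h : ω ∈ Eᶜ <;> simp [hZdef, Set.indicator_apply, h, abs_nonneg]
  have hYint : Integrable Y μ :=
    hX₂int.abs.mono' hmY.aestronglyMeasurable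
      (ae_of_all _ fun ω => by rw [Real.norm_eq_abs]; exact habsY ω)
  have hZint : Integrable Z μ :=
    hX₂int.abs.mono' hmZ.aestronglyMeasurable
      (ae_of_all _ fun ω => by rw [Real.norm_eq_abs]; exact habsZ ω)
  have hmulbound : ∀ (W : Ω → ℝ), (∀ ω, |W ω| ≤ |X₂ ω|) → AEMeasurable W μ →
      Integrable (fun ω => X₁ ω * W ω) μ := by
    intro W hW hmW
    refine Integrable.mono' (hsq₁.add hsq₂) (hm₁.mul hmW).aestronglyMeasurable
      (ae_of_all _ fun ω => ?_)
    have h1 : |X₁ ω * W ω| ≤ |X₁ ω| * |X₂ ω| := by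
      rw [abs_mul]
      exact mul_le_mul_of_nonneg_left (hW ω) (abs_nonneg _)
    have h2 : |X₁ ω| * |X₂ ω| ≤ X₁ ω ^ 2 + X₂ ω ^ 2 := by
      nlinarith [sq_nonneg (|X₁ ω| - |X₂ ω|), sq_abs (X₁ ω), sq_abs (X₂ ω), abs_nonneg (X₁ ω),
        abs_nonneg (X₂ ω)]
    rw [Real.norm_eq_abs]; exact h1.trans h2
  have hX₁Y : Integrable (fun ω => X₁ ω * Y ω) μ := hmulbound Y habsY hmY
  have hX₁Z : Integrable (fun ω => X₁ ω * Z ω) μ := hmulbound Z habsZ hmZ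
  -- independence gives cov(X₁, Y) = 0
  have hindY : ∫ ω, X₁ ω * Y ω ∂μ = (∫ ω, X₁ ω ∂μ) * ∫ ω, Y ω ∂μ :=
    hindep.integral_fun_mul_eq_mul_integral hm₁.aestronglyMeasurable hmY.aestronglyMeasurable
  -- first part
  have hsplit_int : ∫ ω, X₂ ω ∂μ = (∫ ω, Y ω ∂μ) + ∫ ω, Z ω ∂μ := by
    rw [← integral_add hYint hZint]
    refine integral_congr_ae (ae_of_all _ fun ω => ?_)
    show X₂ ω = Y ω + Z ω
    exact hYZ ω
  have hsplit_mul : ∫ ω, X₁ ω * X₂ ω ∂μ =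
      (∫ ω, X₁ ω * Y ω ∂μ) + ∫ ω, X₁ ω * Z ω ∂μ := by
    rw [← integral_add hX₁Y hX₁Z]
    refine integral_congr_ae (ae_of_all _ fun ω => ?_)
    show X₁ ω * X₂ ω = X₁ ω * Y ω + X₁ ω * Z ω
    rw [hYZ ω]; ring
  have hcov_eq : cov μ X₁ X₂ = cov μ X₁ Z := by
    simp only [cov, hsplit_mul, hsplit_int, hindY]
    ring
  refine ⟨hcov_eq, ?_⟩
  -- second part
  set m : ℝ := ∫ ω, X₁ ω ∂μ with hm
  have hcov_center : cov μ X₁ Z = ∫ ω, (X₁ ω - m) * Z ω ∂μ := by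
    have : Integrable (fun ω => X₁ ω * Z ω - m * Z ω) μ :=
      hX₁Z.sub (hZint.const_mul m)
    simp only [cov, ← hm]
    rw [show (fun ω => (X₁ ω - m) * Z ω) = fun ω => X₁ ω * Z ω - m * Z ω by
          funext ω; ring,
      integral_sub hX₁Z (hZint.const_mul m), integral_const_mul]
  have hX₁mL2 : MemLp (fun ω => X₁ ω - m) 2 μ := hX₁L2.sub (memLp_const m)
  have hZsq_int : Integrable (fun ω => Z ω ^ 2) μ := by
    refine hsq₂.mono' (hmZ.pow_const 2).aestronglyMeasurable (ae_of_all _ fun ω => ?_)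
    have := habsZ ω
    rw [Real.norm_eq_abs, abs_of_nonneg (sq_nonneg _)]
    nlinarith [abs_nonneg (Z ω), sq_abs (Z ω), sq_abs (X₂ ω)]
  have hZL2 : MemLp Z 2 μ := by
    rw [memLp_two_iff_integrable_sq hmZ.aestronglyMeasurable]
    exact hZsq_int
  have hCS1 : |cov μ X₁ Z| ≤
      Real.sqrt (∫ ω, (X₁ ω - m) ^ 2 ∂μ) * Real.sqrt (∫ ω, Z ω ^ 2 ∂μ) := by
    rw [hcov_center]
    exact cs_aux μ _ _ hX₁mL2 hZL2
  have hvar : ∫ ω, (X₁ ω - m) ^ 2 ∂μ = variance X₁ μ := by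
    rw [variance_eq_integral hm₁]
  -- bound ∫ Z² by Cauchy-Schwarz
  have hZsq_eq : ∀ ω, Z ω ^ 2 = X₂ ω ^ 2 * Eᶜ.indicator (fun _ => (1 : ℝ)) ω := by
    intro ω
    by_cases h : ω ∈ Eᶜ <;> simp [hZdef, Set.indicator_apply, h, mul_pow]
  have hX₂sqL2 : MemLp (fun ω => X₂ ω ^ 2) 2 μ := by
    rw [memLp_two_iff_integrable_sq (hm₂.pow_const 2).aestronglyMeasurable]
    simpa [← pow_mul] using h₂
  have hindL2 : MemLp (Eᶜ.indicator (fun _ => (1 : ℝ))) 2 μ :=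
    memLp_indicator_const 2 hE.compl 1 (Or.inr (measure_ne_top μ _))
  have hCS2 : |∫ ω, X₂ ω ^ 2 * Eᶜ.indicator (fun _ => (1 : ℝ)) ω ∂μ| ≤
      Real.sqrt (∫ ω, (X₂ ω ^ 2) ^ 2 ∂μ)
        * Real.sqrt (∫ ω, (Eᶜ.indicator (fun _ => (1 : ℝ)) ω) ^ 2 ∂μ) :=
    cs_aux μ _ _ hX₂sqL2 hindL2
  have hind_sq : ∫ ω, (Eᶜ.indicator (fun _ => (1 : ℝ)) ω) ^ 2 ∂μ = (μ Eᶜ).toReal := by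
    have : ∀ ω, (Eᶜ.indicator (fun _ => (1 : ℝ)) ω) ^ 2
        = Eᶜ.indicator (fun _ => (1 : ℝ)) ω := by
      intro ω; by_cases h : ω ∈ Eᶜ <;> simp [Set.indicator_apply, h]
    rw [integral_congr_ae (ae_of_all _ this), integral_indicator_const _ hE.compl]
    simp [measureReal_def]
  have h4eq : ∫ ω, (X₂ ω ^ 2) ^ 2 ∂μ = ∫ ω, X₂ ω ^ 4 ∂μ := by
    refine integral_congr_ae (ae_of_all _ fun ω => ?_)
    ring
  have hZsq_nonneg : 0 ≤ ∫ ω, Z ω ^ 2 ∂μ := integral_nonneg fun ω => sq_nonneg _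
  have hZsq_bound : ∫ ω, Z ω ^ 2 ∂μ ≤
      Real.sqrt (∫ ω, X₂ ω ^ 4 ∂μ) * Real.sqrt ((μ Eᶜ).toReal) := by
    have heq : ∫ ω, Z ω ^ 2 ∂μ = ∫ ω, X₂ ω ^ 2 * Eᶜ.indicator (fun _ => (1 : ℝ)) ω ∂μ :=
      integral_congr_ae (ae_of_all _ hZsq_eq)
    calc ∫ ω, Z ω ^ 2 ∂μ ≤ |∫ ω, X₂ ω ^ 2 * Eᶜ.indicator (fun _ => (1 : ℝ)) ω ∂μ| := by
          rw [heq]; exact le_abs_self _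
      _ ≤ _ := by rw [← h4eq, ← hind_sq]; exact hCS2
  have h4nonneg : 0 ≤ ∫ ω, X₂ ω ^ 4 ∂μ := by
    refine integral_nonneg fun ω => ?_
    positivity
  have htnonneg : 0 ≤ (μ Eᶜ).toReal := ENNReal.toReal_nonneg
  have hsqrt_bound : Real.sqrt (∫ ω, Z ω ^ 2 ∂μ) ≤
      (∫ ω, X₂ ω ^ 4 ∂μ) ^ ((1 : ℝ) / 4) * (μ Eᶜ).toReal ^ ((1 : ℝ) / 4) := by
    have h1 : Real.sqrt (∫ ω, Z ω ^ 2 ∂μ) ≤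
        Real.sqrt (Real.sqrt (∫ ω, X₂ ω ^ 4 ∂μ) * Real.sqrt ((μ Eᶜ).toReal)) :=
      Real.sqrt_le_sqrt hZsq_bound
    have h2 : Real.sqrt (Real.sqrt (∫ ω, X₂ ω ^ 4 ∂μ) * Real.sqrt ((μ Eᶜ).toReal))
        = Real.sqrt (Real.sqrt (∫ ω, X₂ ω ^ 4 ∂μ)) * Real.sqrt (Real.sqrt ((μ Eᶜ).toReal)) :=
      Real.sqrt_mul (Real.sqrt_nonneg _) _
    have h3 : ∀ x : ℝ, 0 ≤ x → Real.sqrt (Real.sqrt x) = x ^ ((1 : ℝ) / 4) := by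
      intro x hx
      rw [Real.sqrt_eq_rpow, Real.sqrt_eq_rpow, ← Real.rpow_mul hx]
      norm_num
    rw [h2, h3 _ h4nonneg, h3 _ htnonneg] at h1
    exact h1
  rw [hcov_eq]
  calc |cov μ X₁ Z| ≤ Real.sqrt (∫ ω, (X₁ ω - m) ^ 2 ∂μ) * Real.sqrt (∫ ω, Z ω ^ 2 ∂μ) := hCS1
    _ = Real.sqrt (variance X₁ μ) * Real.sqrt (∫ ω, Z ω ^ 2 ∂μ) := by rw [hvar]
    _ ≤ Real.sqrt (variance X₁ μ) *
        ((∫ ω, X₂ ω ^ 4 ∂μ) ^ ((1 : ℝ) / 4) * (μ Eᶜ).toReal ^ ((1 : ℝ) / 4)) :=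
        mul_le_mul_of_nonneg_left hsqrt_bound (Real.sqrt_nonneg _)
    _ = _ := by ring
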